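/- Let F be a field of characteristic 2 and D a finite-dimensional central division algebra over F carrying an F-linear involution. Then u⁻(D) ≤ ũ(D): for every anisotropic alternating hermitian form ψ over (D,θ) there exists an anisotropic nonsingular quadratic form over (D,θ) of the same dimension (having ψ as its polar form). -/

import Mathlib

noncomputable section GenQuadForm

open scoped TensorProduct

/-- An `F`-linear involution (of the first kind) on the `F`-algebra `D`. -/
def IsFInvolution (F : Type*) {D : Type*} [Field F] [Ring D] [Algebra F D]
    (θ : D → D) : Prop :=
  (∀ a b : D, θ (a + b) = θ a + θ b) ∧
  (∀ (c : F) (a : D), θ (c • a) = c • θ a) ∧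
  (∀ a b : D, θ (a * b) = θ b * θ a) ∧
  (∀ a : D, θ (θ a) = a)

/-- `Sym(D,θ)`, the set of symmetric elements. -/
def SymSet {D : Type*} (θ : D → D) : Set D := {a | θ a = a}

/-- `Alt(D,θ) = {a - θ a | a ∈ D}`, the set of alternating elements. -/
def AltSet {D : Type*} [Ring D] (θ : D → D) : Set D := {a | ∃ b : D, a = b - θ b}

/-- The right scalar multiple of a vector `x ∈ Dⁿ` by `d ∈ D`. -/
def rsmul {D : Type*} [Ring D] {n : ℕ} (x : Fin n → D) (d : D) : Fin n → D :=
  fun i => x i * d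

/-- `h` is a hermitian form on the (right) `D`-vector space `Dⁿ` with respect to the
involution `θ`: bi-additive, sesquilinear and `θ`-symmetric. (Every `n`-dimensional right
`D`-vector space is isomorphic to `Dⁿ`.) -/
def IsHermForm {D : Type*} [Ring D] (θ : D → D) (n : ℕ)
    (h : (Fin n → D) → (Fin n → D) → D) : Prop :=
  (∀ x x' y : Fin n → D, h (x + x') y = h x y + h x' y) ∧
  (∀ x y y' : Fin n → D, h x (y + y') = h x y + h x y') ∧
  (∀ (x y : Fin n → D) (d₁ d₂ : D), h (rsmul x d₁) (rsmul y d₂) = θ d₁ * h x y * d₂) ∧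
  (∀ x y : Fin n → D, h y x = θ (h x y))

/-- A hermitian form is anisotropic if `h x x = 0` only for `x = 0`. -/
def HermAnisotropic {D : Type*} [Ring D] (n : ℕ)
    (h : (Fin n → D) → (Fin n → D) → D) : Prop :=
  ∀ x : Fin n → D, h x x = 0 → x = 0

/-- A hermitian form is alternating if `h x x ∈ Alt(D,θ)` for all `x`. -/
def HermAlternating {D : Type*} [Ring D] (θ : D → D) (n : ℕ)
    (h : (Fin n → D) → (Fin n → D) → D) : Prop :=
  ∀ x : Fin n → D, h x x ∈ AltSet θ

/-- A hermitian form is direct if `h x x ∉ Alt(D,θ)` for all `x ≠ 0`. -/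
def HermDirect {D : Type*} [Ring D] (θ : D → D) (n : ℕ)
    (h : (Fin n → D) → (Fin n → D) → D) : Prop :=
  ∀ x : Fin n → D, x ≠ 0 → h x x ∉ AltSet θ

/-- A hermitian form is nondegenerate if its radical is trivial. -/
def HermNondegenerate {D : Type*} [Ring D] (n : ℕ)
    (h : (Fin n → D) → (Fin n → D) → D) : Prop :=
  ∀ x : Fin n → D, (∀ y : Fin n → D, h x y = 0) → x = 0

/-- The diagonal hermitian form `⟨a₁,…,aₙ⟩ʰ` over `(D,θ)`. -/
def diagHerm {D : Type*} [Ring D] (θ : D → D) {n : ℕ} (a : Fin n → D) :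
    (Fin n → D) → (Fin n → D) → D :=
  fun x y => ∑ i, θ (x i) * a i * y i

/-- `q` (a representative function of a map `Dⁿ → D/Alt(D,θ)`) is a generalised quadratic form
over `(D,θ)` with polar form `h`: all defining identities are required modulo `Alt(D,θ)`. -/
def IsQuadForm {D : Type*} [Ring D] (θ : D → D) (n : ℕ)
    (q : (Fin n → D) → D) (h : (Fin n → D) → (Fin n → D) → D) : Prop :=
  IsHermForm θ n h ∧
  (∀ (x : Fin n → D) (d : D), q (rsmul x d) - θ d * q x * d ∈ AltSet θ) ∧
  (∀ x y : Fin n → D, q (x + y) - q x - q y - h x y ∈ AltSet θ)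

/-- A quadratic form over `(D,θ)` is isotropic if it vanishes modulo `Alt(D,θ)` at some
nonzero vector. -/
def QuadIsotropic {D : Type*} [Ring D] (θ : D → D) (n : ℕ)
    (q : (Fin n → D) → D) : Prop :=
  ∃ x : Fin n → D, x ≠ 0 ∧ q x ∈ AltSet θ

/-- A quadratic form over `(D,θ)` is anisotropic if it is not isotropic. -/
def QuadAnisotropic {D : Type*} [Ring D] (θ : D → D) (n : ℕ)
    (q : (Fin n → D) → D) : Prop :=
  ∀ x : Fin n → D, x ≠ 0 → q x ∉ AltSet θ

/-- A quadratic form over `(D,θ)` represents `a ∈ D` if its value at some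
nonzero vector is `a + Alt(D,θ)`. -/
def QuadRepresents {D : Type*} [Ring D] (θ : D → D) (n : ℕ)
    (q : (Fin n → D) → D) (a : D) : Prop :=
  ∃ x : Fin n → D, x ≠ 0 ∧ q x - a ∈ AltSet θ

/-- A quadratic form over `(D,θ)` is totally singular if its polar form is identically zero. -/
def QuadTotallySingular {D : Type*} [Ring D] (θ : D → D) (n : ℕ)
    (q : (Fin n → D) → D) : Prop :=
  IsQuadForm θ n q (fun _ _ => 0)

/-- A quadratic form over `(D,θ)` is nonsingular if its polar form is nondegenerate. -/
def QuadNonsingular {D : Type*} [Ring D] (θ : D → D) (n : ℕ)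
    (q : (Fin n → D) → D) : Prop :=
  ∃ h, IsQuadForm θ n q h ∧ HermNondegenerate n h

/-- The diagonal quadratic form `⟨a₁,…,aₙ⟩` over `(D,θ)`. -/
def diagQuad {D : Type*} [Ring D] (θ : D → D) {n : ℕ} (a : Fin n → D) :
    (Fin n → D) → D :=
  fun x => ∑ i, θ (x i) * a i * x i

/-- `u⁺(D)`: the supremum of the dimensions of anisotropic hermitian forms over `(D,θ)`. -/
def uHermPlus {D : Type*} [DivisionRing D] (θ : D → D) : ℕ∞ :=
  ⨆ n ∈ {n : ℕ | ∃ h, IsHermForm θ n h ∧ HermAnisotropic n h}, (n : ℕ∞)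

/-- `u⁺_d(D)`: the supremum of the dimensions of direct hermitian forms over `(D,θ)`. -/
def uHermPlusDirect {D : Type*} [DivisionRing D] (θ : D → D) : ℕ∞ :=
  ⨆ n ∈ {n : ℕ | ∃ h, IsHermForm θ n h ∧ HermDirect θ n h}, (n : ℕ∞)

/-- `u⁻(D)`: the supremum of the dimensions of anisotropic alternating hermitian forms
over `(D,θ)`. -/
def uHermMinus {D : Type*} [DivisionRing D] (θ : D → D) : ℕ∞ :=
  ⨆ n ∈ {n : ℕ | ∃ h, IsHermForm θ n h ∧ HermAnisotropic n h ∧ HermAlternating θ n h},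
    (n : ℕ∞)

/-- `u(D)`: the supremum of the dimensions of anisotropic (generalised) quadratic forms
over `(D,θ)`. -/
def uQuad {D : Type*} [DivisionRing D] (θ : D → D) : ℕ∞ :=
  ⨆ n ∈ {n : ℕ | ∃ q h, IsQuadForm θ n q h ∧ QuadAnisotropic θ n q}, (n : ℕ∞)

/-- `ũ(D)`: the supremum of the dimensions of anisotropic nonsingular quadratic forms
over `(D,θ)`. -/
def uQuadTilde {D : Type*} [DivisionRing D] (θ : D → D) : ℕ∞ :=
  ⨆ n ∈ {n : ℕ | ∃ q, QuadNonsingular θ n q ∧ QuadAnisotropic θ n q}, (n : ℕ∞)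

/-- The polar form of a quadratic form over a field. -/
def polarF {F : Type*} [Field F] {n : ℕ} (q : (Fin n → F) → F) :
    (Fin n → F) → (Fin n → F) → F :=
  fun x y => q (x + y) - q x - q y

/-- A quadratic form over the field `F` (on `Fⁿ`): `q (a • x) = a² q x` and the polar
form is bilinear. -/
def IsQuadFormField {F : Type*} [Field F] (n : ℕ) (q : (Fin n → F) → F) : Prop :=
  (∀ (a : F) (x : Fin n → F), q (a • x) = a ^ 2 * q x) ∧
  (∀ x x' y : Fin n → F, polarF q (x + x') y = polarF q x y + polarF q x' y) ∧
  (∀ (a : F) (x y : Fin n → F), polarF q (a • x) y = a * polarF q x y)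

def QFieldNonsingular {F : Type*} [Field F] (n : ℕ) (q : (Fin n → F) → F) : Prop :=
  ∀ x : Fin n → F, (∀ y : Fin n → F, polarF q x y = 0) → x = 0

def QFieldTotallySingular {F : Type*} [Field F] (n : ℕ) (q : (Fin n → F) → F) : Prop :=
  ∀ x y : Fin n → F, q (x + y) = q x + q y

def QFieldAnisotropic {F : Type*} [Field F] (n : ℕ) (q : (Fin n → F) → F) : Prop :=
  ∀ x : Fin n → F, q x = 0 → x = 0

/-- `ũ(F)`: the supremum of the dimensions of anisotropic nonsingular quadratic forms
over the field `F`. -/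
def uTildeField (F : Type*) [Field F] : ℕ∞ :=
  ⨆ n ∈ {n : ℕ | ∃ q : (Fin n → F) → F,
      IsQuadFormField n q ∧ QFieldNonsingular n q ∧ QFieldAnisotropic n q}, (n : ℕ∞)

/-- The subfield `F² = {a² : a ∈ F}` of a field of characteristic `2`. -/
def sqSubfield (F : Type*) [Field F] [CharP F 2] : Subfield F :=
  (frobenius F 2).fieldRange

/-- `[F : F²]` as an element of `ℕ ∪ {∞}`. -/
def sqIndex (F : Type*) [Field F] [CharP F 2] : ℕ∞ :=
  Cardinal.toENat (Module.rank (sqSubfield F) F)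

/-- `℘(F) = {a² + a : a ∈ F}`. -/
def wpSet (F : Type*) [Field F] : Set F := {a | ∃ b : F, a = b ^ 2 + b}



/-- Auxiliary: construction of an anisotropic quadratic form with prescribed alternating
anisotropic polar form. -/
theorem stmt4_key {F D : Type*} [Field F] [CharP F 2] [DivisionRing D] [Algebra F D]
    (θ : D → D) (hθ : IsFInvolution F θ) (n : ℕ)
    (h : (Fin n → D) → (Fin n → D) → D) (hherm : IsHermForm θ n h)
    (hani : HermAnisotropic n h) (halt : HermAlternating θ n h) :
    ∃ q : (Fin n → D) → D, IsQuadForm θ n q h ∧ QuadAnisotropic θ n q := by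
  obtain ⟨θadd, θsmul, θmul, θinv⟩ := hθ
  obtain ⟨haddl, haddr, hsesq, hsym⟩ := hherm
  have two0 : ∀ a : D, a + a = 0 := by
    intro a
    have h2 : (1 + 1 : F) = 0 := by
      have := CharP.cast_eq_zero F 2
      rwa [show ((2 : ℕ) : F) = 1 + 1 by norm_num] at this
    have hD : (1 + 1 : D) = 0 := by
      rw [show (1 + 1 : D) = algebraMap F D (1 + 1) by rw [map_add, map_one], h2, map_zero]
    calc a + a = (1 + 1) * a := by rw [add_mul, one_mul]
      _ = 0 := by rw [hD, zero_mul]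
  have neg_eq : ∀ a : D, -a = a := fun a => neg_eq_of_add_eq_zero_left (two0 a)
  have θ0 : θ 0 = 0 := by
    have h00 : θ 0 = θ 0 + θ 0 := by simpa using θadd 0 0
    exact (left_eq_add.mp h00)
  have θsub : ∀ a b : D, θ (a - b) = θ a - θ b := fun a b =>
    map_sub (AddMonoidHom.mk' θ θadd) a b
  have θsum : ∀ (f : Fin n → D), θ (∑ i, f i) = ∑ i, θ (f i) := fun f =>
    map_sum (AddMonoidHom.mk' θ θadd) f Finset.univ
  -- sums of alternating elements are alternating
  have alt_sum1 : ∀ (s : Finset (Fin n)) (g : Fin n → D),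
      (∀ i, g i ∈ AltSet θ) → (∑ i ∈ s, g i) ∈ AltSet θ := by
    intro s
    induction s using Finset.induction with
    | empty => intro g _; rw [Finset.sum_empty]; exact ⟨0, by rw [θ0, sub_zero]⟩
    | insert _ _ hns ih =>
      intro g hg
      rw [Finset.sum_insert hns]
      obtain ⟨u, hu⟩ := hg _
      obtain ⟨v, hv⟩ := ih g hg
      exact ⟨u + v, by rw [hu, hv, θadd]; abel⟩
  have alt_sum : ∀ (f : Fin n → Fin n → D), (∀ i j, f i j ∈ AltSet θ) →
      (∑ i, ∑ j, f i j) ∈ AltSet θ := fun f hf =>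
    alt_sum1 _ _ fun i => alt_sum1 _ _ (hf i)
  -- additivity of h over sums
  have hsuml : ∀ (g : Fin n → (Fin n → D)) (y : Fin n → D),
      h (∑ i, g i) y = ∑ i, h (g i) y := fun g y =>
    map_sum (AddMonoidHom.mk' (fun x => h x y) fun a b => haddl a b y) g Finset.univ
  have hsumr : ∀ (x : Fin n → D) (g : Fin n → (Fin n → D)),
      h x (∑ j, g j) = ∑ j, h x (g j) := fun x g =>
    map_sum (AddMonoidHom.mk' (fun y => h x y) fun a b => haddr x a b) g Finset.univ
  -- the standard basis
  set e : Fin n → (Fin n → D) := fun i => Pi.single i 1 with edef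
  have rs : ∀ (i : Fin n) (d : D), rsmul (e i) d = Pi.single i d := by
    intro i d; funext j
    simp [rsmul, edef, Pi.single_apply, ite_mul]
  have hx : ∀ x y : Fin n → D, h x y = ∑ i, ∑ j, θ (x i) * h (e i) (e j) * y j := by
    intro x y
    have hx1 : x = ∑ i, rsmul (e i) (x i) := by
      rw [show (∑ i, rsmul (e i) (x i)) = ∑ i, Pi.single i (x i) from
        Finset.sum_congr rfl fun i _ => rs i (x i), Finset.univ_sum_single]
    have hy1 : y = ∑ i, rsmul (e i) (y i) := by
      rw [show (∑ i, rsmul (e i) (y i)) = ∑ i, Pi.single i (y i) from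
        Finset.sum_congr rfl fun i _ => rs i (y i), Finset.univ_sum_single]
    conv_lhs => rw [hx1, hy1]
    rw [hsuml]
    refine Finset.sum_congr rfl fun i _ => ?_
    rw [hsumr]
    exact Finset.sum_congr rfl fun j _ => hsesq (e i) (e j) (x i) (y j)
  -- diagonal representatives
  choose b hb using fun i => halt (e i)
  -- the "upper triangular" coefficients
  set c : Fin n → Fin n → D :=
    fun i j => if i < j then h (e i) (e j) else if i = j then b i else 0 with cdef
  have csum : ∀ i j, c i j + θ (c j i) = h (e i) (e j) := by
    intro i j
    rcases lt_trichotomy i j with hij | hij | hij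
    · have h1 : c i j = h (e i) (e j) := by simp only [cdef]; rw [if_pos hij]
      have h2 : c j i = 0 := by
        simp only [cdef]; rw [if_neg (lt_asymm hij), if_neg hij.ne']
      rw [h1, h2, θ0, add_zero]
    · subst hij
      have h1 : c i i = b i := by simp [cdef]
      rw [h1, hb i, sub_eq_add_neg, neg_eq]
    · have h1 : c i j = 0 := by
        simp only [cdef]; rw [if_neg (lt_asymm hij), if_neg hij.ne']
      have h2 : c j i = h (e j) (e i) := by simp only [cdef]; rw [if_pos hij]
      rw [h1, h2, zero_add]
      exact (hsym (e j) (e i)).symm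
  -- the quadratic form
  set q : (Fin n → D) → D := fun x => ∑ i, ∑ j, θ (x i) * c i j * x j with qdef
  have θq : ∀ x : Fin n → D, θ (q x) = ∑ i, ∑ j, θ (x i) * (θ (c j i) * x j) := by
    intro x
    calc θ (q x) = ∑ i, θ (∑ j, θ (x i) * c i j * x j) := θsum _
      _ = ∑ i, ∑ j, θ (θ (x i) * c i j * x j) :=
          Finset.sum_congr rfl fun i _ => θsum _
      _ = ∑ i, ∑ j, θ (x j) * (θ (c i j) * x i) :=
          Finset.sum_congr rfl fun i _ => Finset.sum_congr rfl fun j _ => by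
            rw [θmul, θmul, θinv]
      _ = ∑ i, ∑ j, θ (x i) * (θ (c j i) * x j) := Finset.sum_comm
  have hqq : ∀ x : Fin n → D, q x - θ (q x) = h x x := by
    intro x
    rw [θq x, hx x x, qdef]
    simp only [← Finset.sum_sub_distrib]
    refine Finset.sum_congr rfl fun i _ => Finset.sum_congr rfl fun j _ => ?_
    rw [← csum i j, sub_eq_add_neg, neg_eq]
    noncomm_ring
  refine ⟨q, ⟨⟨haddl, haddr, hsesq, hsym⟩, ?_, ?_⟩, ?_⟩
  · -- scaling
    intro x d
    have hq : q (rsmul x d) = θ d * q x * d := by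
      rw [qdef]
      simp only [rsmul, Finset.mul_sum, Finset.sum_mul]
      refine Finset.sum_congr rfl fun i _ => Finset.sum_congr rfl fun j _ => ?_
      rw [θmul]; noncomm_ring
    rw [hq, sub_self]
    exact ⟨0, by rw [θ0, sub_zero]⟩
  · -- polar form
    intro x y
    have e2 : (∑ i, ∑ j, θ (y i) * c i j * x j) = ∑ i, ∑ j, θ (y j) * c j i * x i :=
      Finset.sum_comm
    have eq1 : q (x + y) = q x + q y + ((∑ i, ∑ j, θ (x i) * c i j * y j)
        + ∑ i, ∑ j, θ (y i) * c i j * x j) := by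
      rw [qdef]
      simp only [Pi.add_apply, θadd, ← Finset.sum_add_distrib]
      refine Finset.sum_congr rfl fun i _ => Finset.sum_congr rfl fun j _ => ?_
      noncomm_ring
    have key_eq : q (x + y) - q x - q y - h x y
        = ∑ i, ∑ j, (θ (x i) * c i j * y j + θ (y j) * c j i * x i
            - θ (x i) * h (e i) (e j) * y j) := by
      rw [eq1, e2, hx x y]
      rw [show ∀ S1 S2 H qx qy : D, qx + qy + (S1 + S2) - qx - qy - H = S1 + S2 - H from
        by intros; abel]
      simp only [← Finset.sum_add_distrib, ← Finset.sum_sub_distrib]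
    rw [key_eq]
    refine alt_sum _ fun i j => ?_
    have hH : h (e i) (e j) = c i j + θ (c j i) := (csum i j).symm
    have θa : θ (θ (y j) * c j i * x i) = θ (x i) * (θ (c j i) * y j) := by
      rw [θmul, θmul, θinv]
    have key2 : θ (x i) * c i j * y j + θ (y j) * c j i * x i
        - θ (x i) * h (e i) (e j) * y j
        = (θ (y j) * c j i * x i) - θ (θ (y j) * c j i * x i) := by
      rw [hH, θa]; noncomm_ring
    rw [key2]
    exact ⟨_, rfl⟩
  · -- anisotropy
    intro x hxne hqx
    obtain ⟨u, hu⟩ := hqx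
    apply hxne
    apply hani
    rw [← hqq x, hu]
    have h1 : θ (u - θ u) = θ u - u := by rw [θsub, θinv]
    rw [h1, show (u - θ u) - (θ u - u) = (u - θ u) + (u - θ u) from by abel]
    exact two0 _

/-- `u⁻(D) ≤ ũ(D)`: every anisotropic alternating hermitian form over
`(D,θ)` is the polar form of an anisotropic (nonsingular) quadratic form of the same
dimension. -/
theorem stmt4 {F D : Type*} [Field F] [CharP F 2] [DivisionRing D] [Algebra F D]
    [FiniteDimensional F D] [Algebra.IsCentral F D]
    (θ : D → D) (hθ : IsFInvolution F θ) :
    uHermMinus θ ≤ uQuadTilde θ ∧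
    ∀ (n : ℕ) (h : (Fin n → D) → (Fin n → D) → D), IsHermForm θ n h →
      HermAnisotropic n h → HermAlternating θ n h →
      ∃ q : (Fin n → D) → D, IsQuadForm θ n q h ∧ QuadAnisotropic θ n q := by
  have key := fun (n : ℕ) (h : (Fin n → D) → (Fin n → D) → D) hherm hani halt =>
    stmt4_key (F := F) θ hθ n h hherm hani halt
  refine ⟨?_, key⟩
  apply biSup_mono
  rintro n ⟨h, hherm, hani, halt⟩
  obtain ⟨q, hq, hqa⟩ := key n h hherm hani halt
  exact ⟨q, ⟨h, hq, fun x h0 => hani x (h0 x)⟩, hqa⟩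


end GenQuadForm
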